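/- Let G be a countable set of matrices g = [[a_g, b_g],[c_g, d_g]] in SL(2,ℝ) such that Σ_{g∈G} 1/a_g² < ∞ (all a_g ≠ 0), and there are constants 0 < C₁ ≤ C₂ with C₁ ≤ |a_g/b_g| ≤ C₂ for all g with b_g ≠ 0. Then the series Σ_{g∈G} (x²+1)/((a_g x + b_g)² + (c_g x + d_g)²) converges uniformly on the set {x ∈ ℝ : |x| ≥ max(2/C₁, 1)}. -/

import Mathlib

/-- Uniform convergence of the Poincaré-type series `Σ_g f(g;x)` on `{|x| ≥ max(2/C₁,1)}`,
given `Σ 1/a_g² < ∞` and uniform bounds `C₁ ≤ |a_g/b_g| ≤ C₂`. -/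
theorem stmt12 {G : Type*} [Countable G] (a b c d : G → ℝ)
    (hdet : ∀ g, a g * d g - b g * c g = 1)
    (ha : ∀ g, a g ≠ 0)
    (hsum : Summable fun g => 1 / (a g) ^ 2)
    (C₁ C₂ : ℝ) (hC₁ : 0 < C₁) (hC₁₂ : C₁ ≤ C₂)
    (hbound : ∀ g, b g ≠ 0 → C₁ ≤ |a g / b g| ∧ |a g / b g| ≤ C₂) :
    TendstoUniformlyOn
      (fun (s : Finset G) (x : ℝ) =>
        ∑ g ∈ s, (x ^ 2 + 1) / ((a g * x + b g) ^ 2 + (c g * x + d g) ^ 2))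
      (fun x : ℝ => ∑' g, (x ^ 2 + 1) / ((a g * x + b g) ^ 2 + (c g * x + d g) ^ 2))
      Filter.atTop
      {x : ℝ | max (2 / C₁) 1 ≤ |x|} := by
  apply tendstoUniformlyOn_tsum (u := fun g => 8 / (a g) ^ 2)
  · have := hsum.mul_left 8
    convert this using 2 with g
    · rfl
    ring
  · intro g x hx
    simp only [Set.mem_setOf_eq, max_le_iff] at hx
    obtain ⟨h1, h2⟩ := hx
    have hA : 0 < |a g| := abs_pos.mpr (ha g)
    have hA2 : 0 < (a g) ^ 2 := pow_pos hA 2 |>.trans_le (by rw [sq_abs])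
    have hx1 : (1:ℝ) ≤ x ^ 2 := by nlinarith [sq_abs x]
    -- key bound |b g| ≤ |a g| * |x| / 2
    have hb2 : |b g| ≤ |a g| * |x| / 2 := by
      by_cases hb : b g = 0
      · simp [hb]; positivity
      · have hab := (hbound g hb).1
        rw [abs_div] at hab
        have hB : 0 < |b g| := abs_pos.mpr hb
        have : C₁ * |b g| ≤ |a g| := by
          rw [le_div_iff₀ hB] at hab; linarith
        have hx' : 2 / C₁ ≤ |x| := h1
        have : 2 * |b g| ≤ |a g| * |x| := by
          have h2C : 2 ≤ C₁ * |x| := by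
            rw [div_le_iff₀ hC₁] at hx'; linarith [hx']
          nlinarith [abs_nonneg (b g), abs_nonneg x]
        linarith
    have hkey : (a g) ^ 2 * x ^ 2 / 4 ≤ (a g * x + b g) ^ 2 := by
      have h3 : |a g| * |x| - |b g| ≤ |a g * x + b g| := by
        have := abs_sub_abs_le_abs_sub (a g * x) (-(b g))
        simpa [abs_mul, sub_neg_eq_add] using this
      have h4 : 0 ≤ |a g| * |x| - |b g| := by
        have hx0 : (0:ℝ) ≤ |x| := abs_nonneg x
        nlinarith
      have h5 : |a g| * |x| / 2 ≤ |a g * x + b g| := by linarith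
      calc (a g) ^ 2 * x ^ 2 / 4 = (|a g| * |x| / 2) ^ 2 := by
            rw [← sq_abs (a g), ← sq_abs x]; ring
        _ ≤ |a g * x + b g| ^ 2 := by
            apply pow_le_pow_left₀ (by positivity) h5
        _ = (a g * x + b g) ^ 2 := sq_abs _
    have hD : 0 < (a g * x + b g) ^ 2 + (c g * x + d g) ^ 2 := by
      nlinarith [sq_nonneg (c g * x + d g), sq_abs (a g), sq_abs x]
    have hfnn : 0 ≤ (x ^ 2 + 1) / ((a g * x + b g) ^ 2 + (c g * x + d g) ^ 2) := by
      positivity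
    rw [Real.norm_eq_abs, abs_of_nonneg hfnn, div_le_div_iff₀ hD hA2]
    nlinarith [sq_nonneg (c g * x + d g), sq_abs (a g), sq_abs x]
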